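/- arXiv:2501.16978 — 4 statements merged into one kernel-verified Lean document; each statement's English description precedes it below -/
import Mathlib

section
/- Let F : C → D and G : D → C be functors such that F is left adjoint to G. Then F admits a two-sided adjoint (i.e., F is a Frobenius functor, meaning its left and right adjoints exist and are isomorphic) if and only if G admits a two-sided adjoint. -/
open CategoryTheory

/-- A functor is *Frobenius* if it admits a left adjoint and a right adjoint
which are (naturally) isomorphic, i.e. it admits a two-sided adjoint. -/
def CategoryTheory.Functor.IsFrobenius {C D : Type*} [Category C] [Category D]
    (F : C ⥤ D) : Prop :=
  ∃ (L R : D ⥤ C), Nonempty (L ⊣ F) ∧ Nonempty (F ⊣ R) ∧ Nonempty (L ≅ R)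

/-- Given an adjunction `F ⊣ G`, the functor `F` is Frobenius if and only if `G` is
Frobenius. -/
theorem frobenius_iff_of_adjunction {C D : Type*} [Category C] [Category D]
    (F : C ⥤ D) (G : D ⥤ C) (adj : F ⊣ G) :
    F.IsFrobenius ↔ G.IsFrobenius := by
  constructor
  · rintro ⟨L, R, ⟨h1⟩, ⟨h2⟩, ⟨e⟩⟩
    -- R ≅ G since both are right adjoints of F; hence L ≅ G, so G ⊣ F.
    have eLG : L ≅ G := e ≪≫ Adjunction.rightAdjointUniq h2 adj
    exact ⟨F, F, ⟨adj⟩, ⟨h1.ofNatIsoLeft eLG⟩, ⟨Iso.refl F⟩⟩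
  · rintro ⟨L, R, ⟨h1⟩, ⟨h2⟩, ⟨e⟩⟩
    -- L ≅ F since both are left adjoints of G; hence R ≅ F, so G ⊣ F.
    have eRF : R ≅ F := e.symm ≪≫ Adjunction.leftAdjointUniq h1 adj
    exact ⟨G, G, ⟨h2.ofNatIsoRight eRF⟩, ⟨adj⟩, ⟨Iso.refl G⟩⟩
end

section
/- A Frobenius monoidal functor F : C → D between rigid monoidal categories preserves left duals: for each object c of C there is an isomorphism F(cᵛ) ≅ F(c)ᵛ. -/
open CategoryTheory MonoidalCategory CategoryTheory.Functor

open CategoryTheory.Functor.LaxMonoidal CategoryTheory.Functor.OplaxMonoidal in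
/-- Auxiliary construction: a Frobenius monoidal functor sends an exact pairing to
an exact pairing. -/
noncomputable def frobPairing {C D : Type*} [Category C] [Category D]
    [MonoidalCategory C] [MonoidalCategory D]
    (F : C ⥤ D) [F.LaxMonoidal] [F.OplaxMonoidal]
    (frob₁ : ∀ X Y Z : C,
      μ F (X ⊗ Y) Z ≫ F.map (α_ X Y Z).hom ≫ δ F X (Y ⊗ Z) =
        (δ F X Y ⊗ₘ 𝟙 (F.obj Z)) ≫
          (α_ (F.obj X) (F.obj Y) (F.obj Z)).hom ≫ (𝟙 (F.obj X) ⊗ₘ μ F Y Z))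
    (frob₂ : ∀ X Y Z : C,
      μ F X (Y ⊗ Z) ≫ F.map (α_ X Y Z).inv ≫ δ F (X ⊗ Y) Z =
        (𝟙 (F.obj X) ⊗ₘ δ F Y Z) ≫
          (α_ (F.obj X) (F.obj Y) (F.obj Z)).inv ≫ (μ F X Y ⊗ₘ 𝟙 (F.obj Z)))
    (X Y : C) [ExactPairing X Y] : ExactPairing (F.obj X) (F.obj Y) where
  coevaluation' := ε F ≫ F.map (η_ X Y) ≫ δ F X Y
  evaluation' := μ F Y X ≫ F.map (ε_ X Y) ≫ η F
  coevaluation_evaluation' := by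
    have frob := frob₂ Y X Y
    simp only [tensorHom_id, id_tensorHom] at frob
    calc F.obj Y ◁ (ε F ≫ F.map (η_ X Y) ≫ δ F X Y) ≫ (α_ _ _ _).inv ≫
          (μ F Y X ≫ F.map (ε_ X Y) ≫ η F) ▷ F.obj Y
        = F.obj Y ◁ ε F ≫ F.obj Y ◁ F.map (η_ X Y) ≫
            (F.obj Y ◁ δ F X Y ≫ (α_ _ _ _).inv ≫ μ F Y X ▷ F.obj Y) ≫
            F.map (ε_ X Y) ▷ F.obj Y ≫ η F ▷ F.obj Y := by
          simp only [MonoidalCategory.whiskerLeft_comp, comp_whiskerRight, Category.assoc]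
      _ = F.obj Y ◁ ε F ≫ F.obj Y ◁ F.map (η_ X Y) ≫
            (μ F Y (X ⊗ Y) ≫ F.map (α_ Y X Y).inv ≫ δ F (Y ⊗ X) Y) ≫
            F.map (ε_ X Y) ▷ F.obj Y ≫ η F ▷ F.obj Y := by rw [frob]
      _ = F.obj Y ◁ ε F ≫ μ F Y (𝟙_ C) ≫
            F.map (Y ◁ η_ X Y ≫ (α_ Y X Y).inv ≫ ε_ X Y ▷ Y) ≫
            δ F (𝟙_ C) Y ≫ η F ▷ F.obj Y := by
          simp only [Category.assoc, μ_natural_right_assoc, δ_natural_left_assoc, F.map_comp]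
      _ = (ρ_ (F.obj Y)).hom ≫ (λ_ (F.obj Y)).inv := by
          rw [ExactPairing.coevaluation_evaluation]
          simp
  evaluation_coevaluation' := by
    have frob := frob₁ X Y X
    simp only [tensorHom_id, id_tensorHom] at frob
    calc (ε F ≫ F.map (η_ X Y) ≫ δ F X Y) ▷ F.obj X ≫ (α_ _ _ _).hom ≫
          F.obj X ◁ (μ F Y X ≫ F.map (ε_ X Y) ≫ η F)
        = ε F ▷ F.obj X ≫ F.map (η_ X Y) ▷ F.obj X ≫
            (δ F X Y ▷ F.obj X ≫ (α_ _ _ _).hom ≫ F.obj X ◁ μ F Y X) ≫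
            F.obj X ◁ F.map (ε_ X Y) ≫ F.obj X ◁ η F := by
          simp only [MonoidalCategory.whiskerLeft_comp, comp_whiskerRight, Category.assoc]
      _ = ε F ▷ F.obj X ≫ F.map (η_ X Y) ▷ F.obj X ≫
            (μ F (X ⊗ Y) X ≫ F.map (α_ X Y X).hom ≫ δ F X (Y ⊗ X)) ≫
            F.obj X ◁ F.map (ε_ X Y) ≫ F.obj X ◁ η F := by rw [frob]
      _ = ε F ▷ F.obj X ≫ μ F (𝟙_ C) X ≫
            F.map (η_ X Y ▷ X ≫ (α_ X Y X).hom ≫ X ◁ ε_ X Y) ≫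
            δ F X (𝟙_ C) ≫ F.obj X ◁ η F := by
          simp only [Category.assoc, μ_natural_left_assoc, δ_natural_right_assoc, F.map_comp]
      _ = (λ_ (F.obj X)).hom ≫ (ρ_ (F.obj X)).inv := by
          rw [ExactPairing.evaluation_coevaluation]
          simp

/-- A Frobenius monoidal functor `F : C ⥤ D` between rigid monoidal categories, i.e. a
functor equipped with a lax monoidal structure `(ε, μ)` and an oplax monoidal structure
`(η, δ)` satisfying the two Frobenius compatibility equations, preserves (right) duals:
for every object `c` of `C` there is an isomorphism `F(cᵛ) ≅ F(c)ᵛ`. -/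
theorem frobenius_monoidal_preserves_duals {C D : Type*} [Category C] [Category D]
    [MonoidalCategory C] [MonoidalCategory D] [RigidCategory C] [RigidCategory D]
    (F : C ⥤ D) [F.LaxMonoidal] [F.OplaxMonoidal]
    -- first Frobenius compatibility equation
    (frob₁ : ∀ X Y Z : C,
      LaxMonoidal.μ F (X ⊗ Y) Z ≫ F.map (α_ X Y Z).hom ≫ OplaxMonoidal.δ F X (Y ⊗ Z) =
        (OplaxMonoidal.δ F X Y ⊗ₘ 𝟙 (F.obj Z)) ≫
          (α_ (F.obj X) (F.obj Y) (F.obj Z)).hom ≫ (𝟙 (F.obj X) ⊗ₘ LaxMonoidal.μ F Y Z))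
    -- second Frobenius compatibility equation
    (frob₂ : ∀ X Y Z : C,
      LaxMonoidal.μ F X (Y ⊗ Z) ≫ F.map (α_ X Y Z).inv ≫ OplaxMonoidal.δ F (X ⊗ Y) Z =
        (𝟙 (F.obj X) ⊗ₘ OplaxMonoidal.δ F Y Z) ≫
          (α_ (F.obj X) (F.obj Y) (F.obj Z)).inv ≫ (LaxMonoidal.μ F X Y ⊗ₘ 𝟙 (F.obj Z))) :
    ∀ c : C, Nonempty (F.obj (cᘁ) ≅ (F.obj c)ᘁ) := by
  intro c
  exact ⟨rightDualIso (frobPairing F frob₁ frob₂ c (cᘁ)) HasRightDual.exact⟩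
end

section
/- Let F : C → D be a strong monoidal functor between rigid monoidal categories admitting a right adjoint F^ra. If F^ra admits a Frobenius monoidal structure, then F is a Frobenius functor, i.e., F admits a left adjoint isomorphic to F^ra. -/
open CategoryTheory MonoidalCategory CategoryTheory.Functor

open CategoryTheory.Functor.LaxMonoidal CategoryTheory.Functor.OplaxMonoidal

namespace FrobeniusAux
set_option linter.unusedSectionVars false



variable {D C : Type*} [Category D] [Category C]
  [MonoidalCategory D] [MonoidalCategory C]
  (G : D ⥤ C) [G.LaxMonoidal] [G.OplaxMonoidal]

/-- Frobenius compatibility equations, whiskering form. -/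
def Frob₁ : Prop := ∀ X Y Z : D,
  μ G (X ⊗ Y) Z ≫ G.map (α_ X Y Z).hom ≫ δ G X (Y ⊗ Z) =
    δ G X Y ▷ G.obj Z ≫ (α_ _ _ _).hom ≫ G.obj X ◁ μ G Y Z

def Frob₂ : Prop := ∀ X Y Z : D,
  μ G X (Y ⊗ Z) ≫ G.map (α_ X Y Z).inv ≫ δ G (X ⊗ Y) Z =
    G.obj X ◁ δ G Y Z ≫ (α_ _ _ _).inv ≫ μ G X Y ▷ G.obj Z

variable {G}

/-- A Frobenius monoidal functor preserves exact pairings. -/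
def frobPairing (h₁ : Frob₁ G) (h₂ : Frob₂ G) (X Y : D) [ExactPairing X Y] :
    ExactPairing (G.obj X) (G.obj Y) where
  coevaluation' := ε G ≫ G.map (η_ X Y) ≫ δ G X Y
  evaluation' := μ G Y X ≫ G.map (ε_ X Y) ≫ OplaxMonoidal.η G
  coevaluation_evaluation' := by
    simp only [MonoidalCategory.whiskerLeft_comp, comp_whiskerRight, Category.assoc]
    slice_lhs 3 5 => rw [← h₂]
    slice_lhs 2 3 => rw [μ_natural_right]
    slice_lhs 5 6 => rw [δ_natural_left]
    slice_lhs 3 5 => rw [← G.map_comp, ← G.map_comp, ExactPairing.coevaluation_evaluation]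
    rw [G.map_comp]
    slice_lhs 1 3 => rw [← LaxMonoidal.right_unitality]
    slice_lhs 2 4 => rw [← OplaxMonoidal.left_unitality]
  evaluation_coevaluation' := by
    simp only [MonoidalCategory.whiskerLeft_comp, comp_whiskerRight, Category.assoc]
    slice_lhs 3 5 => rw [← h₁]
    slice_lhs 2 3 => rw [μ_natural_left]
    slice_lhs 5 6 => rw [δ_natural_right]
    slice_lhs 3 5 => rw [← G.map_comp, ← G.map_comp, ExactPairing.evaluation_coevaluation]
    rw [G.map_comp]
    slice_lhs 1 3 => rw [← LaxMonoidal.left_unitality]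
    slice_lhs 2 4 => rw [← OplaxMonoidal.right_unitality]




variable {D C : Type*} [Category D] [Category C]
  [MonoidalCategory D] [MonoidalCategory C]
  (G : D ⥤ C) [G.LaxMonoidal] [G.OplaxMonoidal]

/-- A strong monoidal functor satisfies the first Frobenius equation. -/
lemma frob₁_of_monoidal (F : D ⥤ C) [F.Monoidal] : Frob₁ F := by
  intro X Y Z
  have h := LaxMonoidal.associativity (F := F) X Y Z
  rw [← cancel_epi (μ F X Y ▷ F.obj Z), reassoc_of% h]
  simp only [Category.assoc, Monoidal.μ_δ, Category.comp_id,
    ← comp_whiskerRight_assoc, Monoidal.μ_δ, id_whiskerRight, Category.id_comp]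

/-- A strong monoidal functor satisfies the second Frobenius equation. -/
lemma frob₂_of_monoidal (F : D ⥤ C) [F.Monoidal] : Frob₂ F := by
  intro X Y Z
  have h := LaxMonoidal.associativity_inv (F := F) X Y Z
  rw [← cancel_epi (F.obj X ◁ μ F Y Z), reassoc_of% h]
  simp only [Category.assoc, Monoidal.μ_δ, Category.comp_id,
    ← MonoidalCategory.whiskerLeft_comp_assoc, Monoidal.μ_δ,
    MonoidalCategory.whiskerLeft_id, Category.id_comp]

variable {G}

/-- Naturality of the Frobenius coevaluation across a compatible pair of morphisms. -/
lemma frobCoev_natural {X Y X' Y' : D} [ExactPairing X Y] [ExactPairing X' Y']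
    {u : X ⟶ X'} {u' : Y' ⟶ Y} (hcoev : η_ X Y ≫ u ▷ Y = η_ X' Y' ≫ X' ◁ u') :
    (ε G ≫ G.map (η_ X Y) ≫ δ G X Y) ≫ G.map u ▷ G.obj Y =
      (ε G ≫ G.map (η_ X' Y') ≫ δ G X' Y') ≫ G.obj X' ◁ G.map u' := by
  simp only [Category.assoc, δ_natural_left, δ_natural_right]
  rw [← G.map_comp_assoc, ← G.map_comp_assoc, hcoev]

/-- Naturality of the Frobenius evaluation across a compatible pair of morphisms. -/
lemma frobEv_natural {X Y X' Y' : D} [ExactPairing X Y] [ExactPairing X' Y']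
    {u : X ⟶ X'} {u' : Y' ⟶ Y} (hev : u' ▷ X ≫ ε_ X Y = Y' ◁ u ≫ ε_ X' Y') :
    G.map u' ▷ G.obj X ≫ (μ G Y X ≫ G.map (ε_ X Y) ≫ OplaxMonoidal.η G) =
      G.obj Y' ◁ G.map u ≫ (μ G Y' X' ≫ G.map (ε_ X' Y') ≫ OplaxMonoidal.η G) := by
  rw [μ_natural_left_assoc, μ_natural_right_assoc, ← G.map_comp_assoc, ← G.map_comp_assoc, hev]




variable {C : Type*} [Category C] [MonoidalCategory C]

section ChangeOfPairing

variable {Y Y' Z Z' : C} [ExactPairing Y Y'] [ExactPairing Z Z']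

/-- `tensorLeftHomEquiv` across a change of pairing (coevaluation side). -/
lemma tensorLeftHomEquiv_change {u : Y ⟶ Z} {u' : Z' ⟶ Y'}
    (hcoev : η_ Y Y' ≫ u ▷ Y' = η_ Z Z' ≫ Z ◁ u') {X W : C} (w : Y' ⊗ X ⟶ W) :
    tensorLeftHomEquiv X Z Z' W (u' ▷ X ≫ w) = tensorLeftHomEquiv X Y Y' W w ≫ u ▷ W := by
  dsimp [tensorLeftHomEquiv]
  rw [MonoidalCategory.whiskerLeft_comp]
  slice_lhs 3 4 => rw [← associator_naturality_middle]
  slice_lhs 2 3 => rw [← comp_whiskerRight, ← hcoev, comp_whiskerRight]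
  slice_lhs 3 4 => rw [associator_naturality_left]
  slice_lhs 4 5 => rw [← whisker_exchange]
  simp only [Category.assoc]

/-- `tensorLeftHomEquiv.symm` across a change of pairing (evaluation side). -/
lemma tensorLeftHomEquiv_symm_change {u : Y ⟶ Z} {u' : Z' ⟶ Y'}
    (hev : u' ▷ Y ≫ ε_ Y Y' = Z' ◁ u ≫ ε_ Z Z') {X W : C} (x : X ⟶ Y ⊗ W) :
    (tensorLeftHomEquiv X Z Z' W).symm (x ≫ u ▷ W) =
      u' ▷ X ≫ (tensorLeftHomEquiv X Y Y' W).symm x := by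
  dsimp [tensorLeftHomEquiv]
  rw [MonoidalCategory.whiskerLeft_comp]
  slice_lhs 2 3 => rw [associator_inv_naturality_middle]
  slice_lhs 3 4 => rw [← comp_whiskerRight, ← hev, comp_whiskerRight]
  slice_lhs 2 3 => rw [← associator_inv_naturality_left]
  slice_lhs 1 2 => rw [whisker_exchange]
  simp only [Category.assoc]

/-- `tensorRightHomEquiv` across a change of pairing (coevaluation side). -/
lemma tensorRightHomEquiv_change {A B A' B' : C} [ExactPairing A B] [ExactPairing A' B']
    {u : A ⟶ A'} {u' : B' ⟶ B}
    (hcoev : η_ A B ≫ u ▷ B = η_ A' B' ≫ A' ◁ u') {X Z : C} (x : X ⊗ A' ⟶ Z) :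
    tensorRightHomEquiv X A B Z (X ◁ u ≫ x) = tensorRightHomEquiv X A' B' Z x ≫ Z ◁ u' := by
  dsimp [tensorRightHomEquiv]
  rw [comp_whiskerRight]
  slice_lhs 3 4 => rw [← associator_inv_naturality_middle]
  slice_lhs 2 3 => rw [← MonoidalCategory.whiskerLeft_comp, hcoev, MonoidalCategory.whiskerLeft_comp]
  slice_lhs 3 4 => rw [associator_inv_naturality_right]
  slice_lhs 4 5 => rw [whisker_exchange]
  simp only [Category.assoc]

/-- `tensorRightHomEquiv.symm` across a change of pairing (evaluation side). -/
lemma tensorRightHomEquiv_symm_change {A B A' B' : C} [ExactPairing A B] [ExactPairing A' B']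
    {u : A' ⟶ A} {u' : B ⟶ B'}
    (hev : u' ▷ A' ≫ ε_ A' B' = B ◁ u ≫ ε_ A B) {X Z : C} (w : X ⟶ Z ⊗ B) :
    (tensorRightHomEquiv X A' B' Z).symm (w ≫ Z ◁ u') =
      X ◁ u ≫ (tensorRightHomEquiv X A B Z).symm w := by
  dsimp [tensorRightHomEquiv]
  rw [comp_whiskerRight]
  slice_lhs 2 3 => rw [associator_naturality_middle]
  slice_lhs 3 4 => rw [← MonoidalCategory.whiskerLeft_comp, hev, MonoidalCategory.whiskerLeft_comp]
  slice_lhs 2 3 => rw [← associator_naturality_right]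
  slice_lhs 1 2 => rw [← whisker_exchange]
  simp only [Category.assoc]

/-- Forward naturality of `tensorLeftHomEquiv` in the free (left) variable. -/
lemma tensorLeftHomEquiv_naturality_left {X X' W : C} (f : X ⟶ X') (w : Y' ⊗ X' ⟶ W) :
    tensorLeftHomEquiv X Y Y' W (Y' ◁ f ≫ w) = f ≫ tensorLeftHomEquiv X' Y Y' W w := by
  apply (tensorLeftHomEquiv X Y Y' W).symm.injective
  rw [Equiv.symm_apply_apply, tensorLeftHomEquiv_symm_naturality, Equiv.symm_apply_apply]

/-- `symm` naturality of `tensorLeftHomEquiv` in the target variable. -/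
lemma tensorLeftHomEquiv_symm_naturality_right {X W W' : C} (x : X ⟶ Y ⊗ W) (g : W ⟶ W') :
    (tensorLeftHomEquiv X Y Y' W').symm (x ≫ Y ◁ g) =
      (tensorLeftHomEquiv X Y Y' W).symm x ≫ g := by
  apply (tensorLeftHomEquiv X Y Y' W').injective
  rw [Equiv.apply_symm_apply, tensorLeftHomEquiv_naturality, Equiv.apply_symm_apply]

end ChangeOfPairing


section Main

variable {C D : Type*} [Category C] [Category D]
    [MonoidalCategory C] [MonoidalCategory D] [RigidCategory C] [RigidCategory D]
    (F : C ⥤ D) [F.Monoidal] (R : D ⥤ C) (adj : F ⊣ R)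
    [R.LaxMonoidal] [R.OplaxMonoidal]
    (h₁ : Frob₁ R) (h₂ : Frob₂ R)

/-- The pairing `(R d, R dᘁ)`. -/
def pairR (d : D) : ExactPairing (R.obj d) (R.obj (dᘁ)) := frobPairing h₁ h₂ d (dᘁ)

/-- The pairing `(F c, F cᘁ)`. -/
def pairF (c : C) : ExactPairing (F.obj c) (F.obj (cᘁ)) :=
  frobPairing (frob₁_of_monoidal F) (frob₂_of_monoidal F) c (cᘁ)

lemma pairR_coev_natural {d d' : D} (h : d' ⟶ d) :
    letI := pairR R h₁ h₂ d
    letI := pairR R h₁ h₂ d'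
    η_ (R.obj d') (R.obj (d'ᘁ)) ≫ R.map h ▷ R.obj (d'ᘁ) =
      η_ (R.obj d) (R.obj (dᘁ)) ≫ R.obj d ◁ R.map (hᘁ) :=
  frobCoev_natural (coevaluation_comp_rightAdjointMate h).symm

lemma pairF_coev_natural (F : C ⥤ D) [F.Monoidal] {c c' : C} (g : c ⟶ c') :
    letI := pairF F c
    letI := pairF F c'
    η_ (F.obj c) (F.obj (cᘁ)) ≫ F.map g ▷ F.obj (cᘁ) =
      η_ (F.obj c') (F.obj (c'ᘁ)) ≫ F.obj c' ◁ F.map (gᘁ) :=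
  frobCoev_natural (coevaluation_comp_rightAdjointMate g).symm

/-- The hom-set equivalence exhibiting `R` as a left adjoint of `F`. -/
def homEquivE (d : D) (c : C) : (R.obj d ⟶ c) ≃ (d ⟶ F.obj c) :=
  letI := pairR R h₁ h₂ d
  letI := pairF F c
  ((λ_ (R.obj d)).symm.homCongr (Iso.refl c)).trans <|
  (tensorRightHomEquiv (𝟙_ C) (R.obj d) (R.obj (dᘁ)) c).trans <|
  ((tensorLeftHomEquiv (𝟙_ C) c (cᘁ) (R.obj (dᘁ))).symm).trans <|
  ((ρ_ ((cᘁ : C))).homCongr (Iso.refl (R.obj (dᘁ)))).trans <|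
  ((adj.homEquiv (cᘁ) (dᘁ)).symm).trans <|
  ((Iso.refl (F.obj (cᘁ))).homCongr (λ_ ((dᘁ : D))).symm).trans <|
  ((tensorRightHomEquiv (F.obj (cᘁ)) d (dᘁ) (𝟙_ D)).symm).trans <|
  (tensorLeftHomEquiv d (F.obj c) (F.obj (cᘁ)) (𝟙_ D)).trans <|
  ((Iso.refl d).homCongr (ρ_ (F.obj c)))

lemma homEquivE_natural_right (d : D) {c c' : C} (f : R.obj d ⟶ c) (g : c ⟶ c') :
    homEquivE F R adj h₁ h₂ d c' (f ≫ g) = homEquivE F R adj h₁ h₂ d c f ≫ F.map g := by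
  simp only [homEquivE, Equiv.trans_apply, Iso.homCongr_apply, Iso.refl_hom, Iso.refl_inv,
    Iso.symm_inv, Iso.symm_hom, Category.comp_id, Category.id_comp]
  letI := pairR R h₁ h₂ d
  letI := pairF F c
  letI := pairF F c'
  rw [← Category.assoc (λ_ _).hom f g]
  rw [tensorRightHomEquiv_naturality]
  rw [tensorLeftHomEquiv_symm_change (rightAdjointMate_comp_evaluation g)]
  rw [← rightUnitor_inv_naturality_assoc]
  rw [Adjunction.homEquiv_naturality_left_symm]
  rw [Category.assoc]
  rw [tensorRightHomEquiv_symm_naturality]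
  rw [tensorLeftHomEquiv_change (pairF_coev_natural F g)]
  rw [Category.assoc, rightUnitor_naturality]
  simp only [Category.assoc]

lemma homEquivE_natural_left {d d' : D} (h : d' ⟶ d) (c : C) (f : R.obj d ⟶ c) :
    homEquivE F R adj h₁ h₂ d' c (R.map h ≫ f) = h ≫ homEquivE F R adj h₁ h₂ d c f := by
  simp only [homEquivE, Equiv.trans_apply, Iso.homCongr_apply, Iso.refl_hom, Iso.refl_inv,
    Iso.symm_inv, Iso.symm_hom, Category.comp_id, Category.id_comp]
  letI := pairR R h₁ h₂ d
  letI := pairR R h₁ h₂ d'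
  letI := pairF F c
  rw [← leftUnitor_naturality_assoc]
  rw [tensorRightHomEquiv_change (pairR_coev_natural R h₁ h₂ h)]
  rw [tensorLeftHomEquiv_symm_naturality_right]
  rw [← Category.assoc ((ρ_ ((cᘁ : C))).inv)]
  rw [Adjunction.homEquiv_naturality_right_symm]
  rw [Category.assoc, leftUnitor_inv_naturality]
  rw [← Category.assoc]
  rw [tensorRightHomEquiv_symm_change (rightAdjointMate_comp_evaluation h)]
  rw [tensorLeftHomEquiv_naturality_left]
  simp only [Category.assoc]

/-- The adjunction `R ⊣ F`. -/
def theAdjunction : R ⊣ F :=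
  Adjunction.mkOfHomEquiv
    { homEquiv := fun d c => homEquivE F R adj h₁ h₂ d c
      homEquiv_naturality_left_symm := fun {d' d c} h g => by
        apply (homEquivE F R adj h₁ h₂ d' c).injective
        rw [Equiv.apply_symm_apply, homEquivE_natural_left, Equiv.apply_symm_apply]
      homEquiv_naturality_right := fun {d c c'} f g =>
        homEquivE_natural_right F R adj h₁ h₂ d f g }

end Main
end FrobeniusAux


/-- Let `F : C ⥤ D` be a strong monoidal functor between rigid monoidal categories with a
right adjoint `R = F^ra`, carrying the lax monoidal structure induced by the monoidal
adjunction `F ⊣ R`.  If `R` admits a Frobenius monoidal structure (an oplax monoidal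
structure compatible with its lax monoidal structure via the two Frobenius equations),
then `F` is a Frobenius functor: it admits a left adjoint isomorphic to `R`. -/
theorem frobenius_of_rightAdjoint_frobenius_monoidal {C D : Type*} [Category C] [Category D]
    [MonoidalCategory C] [MonoidalCategory D] [RigidCategory C] [RigidCategory D]
    (F : C ⥤ D) [F.Monoidal] (R : D ⥤ C) (adj : F ⊣ R)
    [R.LaxMonoidal] [adj.IsMonoidal] [R.OplaxMonoidal]
    -- first Frobenius compatibility equation for `R`
    (frob₁ : ∀ X Y Z : D,
      LaxMonoidal.μ R (X ⊗ Y) Z ≫ R.map (α_ X Y Z).hom ≫ OplaxMonoidal.δ R X (Y ⊗ Z) =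
        (OplaxMonoidal.δ R X Y ⊗ₘ 𝟙 (R.obj Z)) ≫
          (α_ (R.obj X) (R.obj Y) (R.obj Z)).hom ≫ (𝟙 (R.obj X) ⊗ₘ LaxMonoidal.μ R Y Z))
    -- second Frobenius compatibility equation for `R`
    (frob₂ : ∀ X Y Z : D,
      LaxMonoidal.μ R X (Y ⊗ Z) ≫ R.map (α_ X Y Z).inv ≫ OplaxMonoidal.δ R (X ⊗ Y) Z =
        (𝟙 (R.obj X) ⊗ₘ OplaxMonoidal.δ R Y Z) ≫
          (α_ (R.obj X) (R.obj Y) (R.obj Z)).inv ≫ (LaxMonoidal.μ R X Y ⊗ₘ 𝟙 (R.obj Z))) :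
    ∃ L : D ⥤ C, Nonempty (L ⊣ F) ∧ Nonempty (L ≅ R) := by
  have h₁ : FrobeniusAux.Frob₁ R := fun X Y Z => by
    simpa only [tensorHom_id, id_tensorHom] using frob₁ X Y Z
  have h₂ : FrobeniusAux.Frob₂ R := fun X Y Z => by
    simpa only [tensorHom_id, id_tensorHom] using frob₂ X Y Z
  exact ⟨R, ⟨FrobeniusAux.theAdjunction F R adj h₁ h₂⟩, ⟨Iso.refl R⟩⟩
end

section
/- Let H be a finite-dimensional Hopf algebra, Λ a left integral and λ a right cointegral with λ(Λ) = 1. Then there exists a unique element g_H ∈ H (the distinguished grouplike element) such that h₁ λ(h₂) = λ(h) g_H for all h ∈ H; moreover g_H is grouplike and invertible. -/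
open TensorProduct

open Coalgebra HopfAlgebra LinearMap

section Aux
variable {k H : Type*} [Field k] [Ring H] [HopfAlgebra k H]

/-- Workhorse: applying `f • G(·⊗·)` to the coassociativity identity. -/
private lemma sum3 (f : H →ₗ[k] k) (G : H ⊗[k] H →ₗ[k] H) {x : H} (rx : Coalgebra.Repr k x (H × H))
    (rl : ∀ i, Coalgebra.Repr k (rx.left i) (H × H)) (rr : ∀ i, Coalgebra.Repr k (rx.right i) (H × H)) :
    ∑ i ∈ rx.index, ∑ m ∈ (rl i).index,
        f ((rl i).left m) • G ((rl i).right m ⊗ₜ[k] rx.right i)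
      = ∑ i ∈ rx.index, ∑ m ∈ (rr i).index,
        f (rx.left i) • G ((rr i).left m ⊗ₜ[k] (rr i).right m) := by
  have key := Coalgebra.sum_tmul_tmul_eq (R := k) rx rl rr
  have h2 := congrArg (fun z => TensorProduct.lid k H
    ((TensorProduct.map f (G.restrictScalars k)) z)) key
  simp only [map_sum, TensorProduct.map_tmul, TensorProduct.lid_tmul,
    LinearMap.coe_restrictScalars] at h2
  exact h2

/-- counit law, right, scalar form -/
private lemma counit_right_sum {x : H} (r : Coalgebra.Repr k x (H × H)) :
    ∑ j ∈ r.index, Coalgebra.counit (R := k) (r.right j) • r.left j = x := by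
  have := congrArg (TensorProduct.rid k H) (Coalgebra.sum_tmul_counit_eq (R := k) r)
  simp only [map_sum, TensorProduct.rid_tmul, one_smul] at this
  exact this

/-- counit law, left, scalar form -/
private lemma counit_left_sum {x : H} (r : Coalgebra.Repr k x (H × H)) :
    ∑ j ∈ r.index, Coalgebra.counit (R := k) (r.left j) • r.right j = x := by
  have := congrArg (TensorProduct.lid k H) (Coalgebra.sum_counit_tmul_eq (R := k) r)
  simp only [map_sum, TensorProduct.lid_tmul, one_smul] at this
  exact this

end Aux

section Aux2
variable {k H : Type*} [Field k] [Ring H] [HopfAlgebra k H] (lam : H →ₗ[k] k)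

/-- sum form of the right-cointegral property -/
private lemma coint_sum
    (hlam : ∀ h : H, (TensorProduct.lid k H)
        ((TensorProduct.map lam LinearMap.id) (Coalgebra.comul (R := k) h)) =
      lam h • (1 : H)) {h : H} (r : Coalgebra.Repr k h (H × H)) :
    ∑ i ∈ r.index, lam (r.left i) • r.right i = lam h • (1 : H) := by
  have := hlam h
  rw [← r.eq] at this
  simp only [map_sum, TensorProduct.map_tmul, TensorProduct.lid_tmul, LinearMap.id_coe,
    id_eq] at this
  exact this

/-- sum form of the map `T` in the statement -/
private lemma T_sum {h : H} (r : Coalgebra.Repr k h (H × H)) :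
    (TensorProduct.rid k H) ((TensorProduct.map LinearMap.id lam) (Coalgebra.comul (R := k) h))
      = ∑ i ∈ r.index, lam (r.right i) • r.left i := by
  rw [← r.eq]
  simp only [map_sum, TensorProduct.map_tmul, TensorProduct.rid_tmul, LinearMap.id_coe, id_eq]

/-- the cointegral property applied to a product, in sum form -/
private lemma coint_mul_sum
    (hlam : ∀ h : H, (TensorProduct.lid k H)
        ((TensorProduct.map lam LinearMap.id) (Coalgebra.comul (R := k) h)) =
      lam h • (1 : H)) {a b : H} (ra : Coalgebra.Repr k a (H × H)) (rb : Coalgebra.Repr k b (H × H)) :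
    ∑ i ∈ ra.index, ∑ m ∈ rb.index,
        lam (ra.left i * rb.left m) • (ra.right i * rb.right m) = lam (a * b) • (1 : H) := by
  have h0 := hlam (a * b)
  rw [Bialgebra.comul_mul, ← ra.eq, ← rb.eq, Finset.sum_mul_sum] at h0
  simp only [Algebra.TensorProduct.tmul_mul_tmul] at h0
  simp only [map_sum, TensorProduct.map_tmul, TensorProduct.lid_tmul, LinearMap.id_coe,
    id_eq] at h0
  exact h0
end Aux2

section Aux3
variable {k H : Type*} [Field k] [Ring H] [HopfAlgebra k H] (lam : H →ₗ[k] k)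

private lemma idA
    (hlam : ∀ h : H, (TensorProduct.lid k H)
        ((TensorProduct.map lam LinearMap.id) (Coalgebra.comul (R := k) h)) =
      lam h • (1 : H)) {h x : H} (rh : Coalgebra.Repr k h (H × H)) (rx : Coalgebra.Repr k x (H × H)) :
    ∑ i ∈ rh.index, lam (rh.left i * x) • rh.right i
      = ∑ j ∈ rx.index, lam (h * rx.left j) • HopfAlgebra.antipode (R := k) (rx.right j) := by
  classical
  set S : H →ₗ[k] H := HopfAlgebra.antipode (R := k) (A := H) with hS
  let rl : ∀ j, Coalgebra.Repr k (rx.left j) (H × H) := fun j => ℛ k (rx.left j)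
  let rr : ∀ j, Coalgebra.Repr k (rx.right j) (H × H) := fun j => ℛ k (rx.right j)
  have step1 : ∀ j ∈ rx.index, lam (h * rx.left j) • S (rx.right j)
      = ∑ i ∈ rh.index, ∑ m ∈ (rl j).index,
          lam (rh.left i * (rl j).left m) •
            (rh.right i * ((rl j).right m * S (rx.right j))) := by
    intro j _
    have e := coint_mul_sum lam hlam rh (rl j)
    calc lam (h * rx.left j) • S (rx.right j)
        = (lam (h * rx.left j) • (1 : H)) * S (rx.right j) := by
          rw [smul_mul_assoc, one_mul]
      _ = (∑ i ∈ rh.index, ∑ m ∈ (rl j).index,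
            lam (rh.left i * (rl j).left m) • (rh.right i * (rl j).right m))
              * S (rx.right j) := by rw [e]
      _ = _ := by
          rw [Finset.sum_mul]
          refine Finset.sum_congr rfl fun i _ => ?_
          rw [Finset.sum_mul]
          exact Finset.sum_congr rfl fun m _ => by rw [smul_mul_assoc, mul_assoc]
  rw [Finset.sum_congr rfl step1, Finset.sum_comm]
  refine Finset.sum_congr rfl fun i _ => ?_
  have s3 := sum3 (lam ∘ₗ LinearMap.mulLeft k (rh.left i))
      ((LinearMap.mulLeft k (rh.right i)) ∘ₗ (LinearMap.mul' k H) ∘ₗ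
        (LinearMap.lTensor H S)) rx rl rr
  simp only [LinearMap.coe_comp, Function.comp_apply, LinearMap.mulLeft_apply,
    LinearMap.lTensor_tmul, LinearMap.mul'_apply] at s3
  rw [s3]
  have perj : ∀ j ∈ rx.index, ∑ m ∈ (rr j).index,
      lam (rh.left i * rx.left j) • (rh.right i * ((rr j).left m * S ((rr j).right m)))
      = (Coalgebra.counit (R := k) (rx.right j) * lam (rh.left i * rx.left j))
          • rh.right i := by
    intro j _
    rw [← Finset.smul_sum, ← Finset.mul_sum, HopfAlgebra.sum_mul_antipode_eq_smul (rr j),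
      mul_smul_comm, mul_one, smul_smul, mul_comm]
  rw [Finset.sum_congr rfl perj]
  conv_lhs => rw [← counit_right_sum (k := k) rx]
  rw [Finset.mul_sum, map_sum, Finset.sum_smul]
  refine Finset.sum_congr rfl fun j _ => ?_
  rw [mul_smul_comm, map_smul, smul_eq_mul]

end Aux3

section Aux4
variable {k H : Type*} [Field k] [Ring H] [HopfAlgebra k H]

private lemma antipode_one' : HopfAlgebra.antipode (R := k) (A := H) 1 = 1 := by
  have := HopfAlgebra.sum_mul_antipode_eq_smul (R := k)
    (⟨(Finset.univ : Finset Unit), fun _ => (1 : H), fun _ => (1 : H),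
      by simp [Algebra.TensorProduct.one_def]⟩ : Coalgebra.Repr k (1 : H) Unit)
  simpa using this

variable (lam : H →ₗ[k] k)

/-- the map `Φ : H* → H`, `f ↦ ∑ f(Λ₍₁₎) S(Λ₍₂₎)` -/
private noncomputable def Phi {ι : Type*} (ind : Finset ι) (l r : ι → H) :
    Module.Dual k H →ₗ[k] H where
  toFun f := ∑ j ∈ ind, f (l j) • HopfAlgebra.antipode (R := k) (r j)
  map_add' f g := by simp [add_smul, Finset.sum_add_distrib]
  map_smul' c f := by simp [Finset.smul_sum, mul_smul]

private lemma Phi_coint {Λ : H} (rΛ : Coalgebra.Repr k Λ (H × H)) (μ : Module.Dual k H)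
    (hμ : ∑ j ∈ rΛ.index, μ (rΛ.left j) • rΛ.right j = μ Λ • (1 : H)) :
    Phi rΛ.index rΛ.left rΛ.right μ = μ Λ • (1 : H) := by
  have := congrArg (HopfAlgebra.antipode (R := k) (A := H)) hμ
  simp only [map_sum, map_smul, antipode_one'] at this
  exact this

/-- the functional `μ_f = (f ⊗ lam) ∘ Δ` -/
private noncomputable def muf (f : Module.Dual k H) : Module.Dual k H :=
  (LinearMap.mul' k k) ∘ₗ (TensorProduct.map f lam) ∘ₗ (Coalgebra.comul (R := k))

private lemma muf_apply (f : Module.Dual k H) {y : H} (r : Coalgebra.Repr k y (H × H)) :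
    muf lam f y = ∑ i ∈ r.index, f (r.left i) * lam (r.right i) := by
  show (LinearMap.mul' k k) ((TensorProduct.map f lam) (Coalgebra.comul (R := k) y)) = _
  rw [← r.eq]
  simp only [map_sum, TensorProduct.map_tmul, LinearMap.mul'_apply]

private lemma muf_coint
    (hlam : ∀ h : H, (TensorProduct.lid k H)
        ((TensorProduct.map lam LinearMap.id) (Coalgebra.comul (R := k) h)) =
      lam h • (1 : H)) (f : Module.Dual k H) {x : H} (rx : Coalgebra.Repr k x (H × H)) :
    ∑ i ∈ rx.index, muf lam f (rx.left i) • rx.right i = muf lam f x • (1 : H) := by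
  classical
  let rl : ∀ i, Coalgebra.Repr k (rx.left i) (H × H) := fun i => ℛ k (rx.left i)
  let rr : ∀ i, Coalgebra.Repr k (rx.right i) (H × H) := fun i => ℛ k (rx.right i)
  have s3 := sum3 f (TensorProduct.lid k H ∘ₗ TensorProduct.map lam LinearMap.id) rx rl rr
  simp only [LinearMap.coe_comp, Function.comp_apply, TensorProduct.map_tmul,
    TensorProduct.lid_tmul, LinearMap.id_coe, id_eq] at s3
  calc ∑ i ∈ rx.index, muf lam f (rx.left i) • rx.right i
      = ∑ i ∈ rx.index, ∑ m ∈ (rl i).index,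
          f ((rl i).left m) • (lam ((rl i).right m) • rx.right i) := by
        refine Finset.sum_congr rfl fun i _ => ?_
        rw [muf_apply lam f (rl i), Finset.sum_smul]
        exact Finset.sum_congr rfl fun m _ => by rw [smul_smul]
    _ = ∑ i ∈ rx.index, ∑ m ∈ (rr i).index,
          f (rx.left i) • (lam ((rr i).left m) • (rr i).right m) := s3
    _ = muf lam f x • (1 : H) := by
        rw [muf_apply lam f rx, Finset.sum_smul]
        refine Finset.sum_congr rfl fun i _ => ?_
        rw [← Finset.smul_sum, coint_sum lam hlam (rr i), smul_smul]

end Aux4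

section Aux5
variable {k H : Type*} [Field k] [Ring H] [HopfAlgebra k H] (lam : H →ₗ[k] k)

private lemma idC
    (hlam : ∀ h : H, (TensorProduct.lid k H)
        ((TensorProduct.map lam LinearMap.id) (Coalgebra.comul (R := k) h)) =
      lam h • (1 : H)) {Λ : H}
    (hint : ∀ h : H, h * Λ = (Coalgebra.counit (R := k) h : k) • Λ)
    (hpair : lam Λ = 1) (rΛ : Coalgebra.Repr k Λ (H × H)) (h : H) :
    ∑ j ∈ rΛ.index, lam (h * rΛ.left j) • HopfAlgebra.antipode (R := k) (rΛ.right j) = h := by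
  rw [← idA lam hlam (ℛ k h) rΛ]
  have e1 : ∀ i ∈ (ℛ k h).index, lam ((ℛ k h).left i * Λ) • (ℛ k h).right i
      = Coalgebra.counit (R := k) ((ℛ k h).left i) • (ℛ k h).right i := by
    intro i _
    rw [hint, map_smul, smul_eq_mul, hpair, mul_one]
  rw [Finset.sum_congr rfl e1, counit_left_sum]

private lemma Phi_surj
    (hlam : ∀ h : H, (TensorProduct.lid k H)
        ((TensorProduct.map lam LinearMap.id) (Coalgebra.comul (R := k) h)) =
      lam h • (1 : H)) {Λ : H}
    (hint : ∀ h : H, h * Λ = (Coalgebra.counit (R := k) h : k) • Λ)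
    (hpair : lam Λ = 1) (rΛ : Coalgebra.Repr k Λ (H × H)) :
    Function.Surjective (Phi (k := k) rΛ.index rΛ.left rΛ.right) := by
  intro h
  refine ⟨lam ∘ₗ LinearMap.mulLeft k h, ?_⟩
  show ∑ j ∈ rΛ.index, (lam ∘ₗ LinearMap.mulLeft k h) (rΛ.left j)
      • HopfAlgebra.antipode (R := k) (rΛ.right j) = h
  simpa using idC lam hlam hint hpair rΛ h

private lemma Phi_inj [Module.Finite k H]
    (hlam : ∀ h : H, (TensorProduct.lid k H)
        ((TensorProduct.map lam LinearMap.id) (Coalgebra.comul (R := k) h)) =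
      lam h • (1 : H)) {Λ : H}
    (hint : ∀ h : H, h * Λ = (Coalgebra.counit (R := k) h : k) • Λ)
    (hpair : lam Λ = 1) (rΛ : Coalgebra.Repr k Λ (H × H)) :
    Function.Injective (Phi (k := k) rΛ.index rΛ.left rΛ.right) := by
  have : FiniteDimensional k H := inferInstance
  exact (LinearMap.injective_iff_surjective_of_finrank_eq_finrank
    (Subspace.dual_finrank_eq)).mpr (Phi_surj lam hlam hint hpair rΛ)

end Aux5

/-- Let `H` be a finite-dimensional Hopf algebra over a field `k`, `Λ` a nonzero left
integral and `λ` a right cointegral (`λ(h₁) h₂ = λ(h) 1` for all `h`) with `λ(Λ) = 1`.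
Then there exists a unique element `g_H ∈ H` (the distinguished grouplike element) such
that `h₁ λ(h₂) = λ(h) g_H` for all `h ∈ H`; moreover `g_H` is grouplike
(`Δ(g_H) = g_H ⊗ g_H`, `ε(g_H) = 1`) and invertible. -/
theorem exists_unique_distinguished_grouplike {k H : Type*} [Field k] [Ring H]
    [HopfAlgebra k H] [Module.Finite k H]
    (Λ : H) (hΛ : Λ ≠ 0)
    (hint : ∀ h : H, h * Λ = (Coalgebra.counit (R := k) h : k) • Λ)
    (lam : H →ₗ[k] k)
    (hlam : ∀ h : H, (TensorProduct.lid k H)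
        ((TensorProduct.map lam LinearMap.id) (Coalgebra.comul (R := k) h)) =
      lam h • (1 : H))
    (hpair : lam Λ = 1) :
    ∃ g : H,
      (∀ h : H, (TensorProduct.rid k H)
          ((TensorProduct.map LinearMap.id lam) (Coalgebra.comul (R := k) h)) =
        lam h • g) ∧
      Coalgebra.comul (R := k) g = g ⊗ₜ[k] g ∧
      Coalgebra.counit (R := k) g = 1 ∧
      IsUnit g ∧
      ∀ g' : H,
        (∀ h : H, (TensorProduct.rid k H)
            ((TensorProduct.map LinearMap.id lam) (Coalgebra.comul (R := k) h)) =
          lam h • g') → g' = g := by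
  classical
  let rΛ : Coalgebra.Repr k Λ (H × H) := ℛ k Λ
  set g : H := ∑ j ∈ rΛ.index, lam (rΛ.right j) • rΛ.left j with hgdef
  have hinj := Phi_inj lam hlam hint hpair rΛ
  -- classification of the functionals μ_f
  have hclass : ∀ f : Module.Dual k H, muf lam f = f g • lam := by
    intro f
    have h1 : Phi (k := k) rΛ.index rΛ.left rΛ.right (muf lam f) = muf lam f Λ • 1 :=
      Phi_coint rΛ (muf lam f) (muf_coint lam hlam f rΛ)
    have h2 : Phi (k := k) rΛ.index rΛ.left rΛ.right lam = (1 : H) := by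
      have := Phi_coint rΛ lam (coint_sum lam hlam rΛ)
      rw [hpair, one_smul] at this
      exact this
    have h3 : muf lam f Λ = f g := by
      rw [muf_apply lam f rΛ, hgdef, map_sum]
      exact Finset.sum_congr rfl fun j _ => by rw [map_smul, smul_eq_mul, mul_comm]
    apply hinj
    rw [h1, h3, map_smul, h2]
  -- the main identity
  have hg : ∀ h : H, (TensorProduct.rid k H)
      ((TensorProduct.map LinearMap.id lam) (Coalgebra.comul (R := k) h)) = lam h • g := by
    intro h
    rw [T_sum lam (ℛ k h), ← sub_eq_zero]
    refine (Module.forall_dual_apply_eq_zero_iff k _).mp fun f => ?_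
    rw [map_sub, sub_eq_zero]
    have lhs : f (∑ i ∈ (ℛ k h).index, lam ((ℛ k h).right i) • (ℛ k h).left i)
        = muf lam f h := by
      rw [muf_apply lam f (ℛ k h), map_sum]
      exact Finset.sum_congr rfl fun i _ => by rw [map_smul, smul_eq_mul, mul_comm]
    rw [lhs, hclass f, map_smul, LinearMap.smul_apply, smul_eq_mul, smul_eq_mul, mul_comm]
  -- grouplike: comultiplication
  have hcg : Coalgebra.comul (R := k) g = g ⊗ₜ[k] g := by
    let rl : ∀ i, Coalgebra.Repr k (rΛ.left i) (H × H) := fun i => ℛ k (rΛ.left i)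
    let rr : ∀ i, Coalgebra.Repr k (rΛ.right i) (H × H) := fun i => ℛ k (rΛ.right i)
    have key := Coalgebra.sum_tmul_tmul_eq (R := k) rΛ rl rr
    have h2 := congrArg (LinearMap.lTensor H
      ((TensorProduct.rid k H).toLinearMap ∘ₗ TensorProduct.map LinearMap.id lam)) key
    simp only [map_sum, LinearMap.lTensor_tmul, LinearMap.coe_comp, Function.comp_apply,
      TensorProduct.map_tmul, LinearEquiv.coe_coe, TensorProduct.rid_tmul,
      LinearMap.id_coe, id_eq] at h2
    calc Coalgebra.comul (R := k) g
        = ∑ i ∈ rΛ.index, ∑ m ∈ (rl i).index,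
            (rl i).left m ⊗ₜ[k] (lam (rΛ.right i) • (rl i).right m) := by
          rw [hgdef, map_sum]
          refine Finset.sum_congr rfl fun i _ => ?_
          rw [map_smul, ← (rl i).eq, Finset.smul_sum]
          exact Finset.sum_congr rfl fun m _ => (TensorProduct.tmul_smul _ _ _).symm
      _ = ∑ i ∈ rΛ.index, ∑ m ∈ (rr i).index,
            rΛ.left i ⊗ₜ[k] (lam ((rr i).right m) • (rr i).left m) := h2
      _ = ∑ i ∈ rΛ.index, (lam (rΛ.right i) • rΛ.left i) ⊗ₜ[k] g := by
          refine Finset.sum_congr rfl fun i _ => ?_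
          rw [← TensorProduct.tmul_sum, ← T_sum lam (rr i), hg (rΛ.right i),
            TensorProduct.tmul_smul, TensorProduct.smul_tmul']
      _ = g ⊗ₜ[k] g := by rw [← TensorProduct.sum_tmul, ← hgdef]
  -- grouplike: counit
  have hεg : Coalgebra.counit (R := k) g = 1 := by
    rw [hgdef, map_sum]
    calc ∑ j ∈ rΛ.index, Coalgebra.counit (R := k) (lam (rΛ.right j) • rΛ.left j)
        = lam (∑ j ∈ rΛ.index, Coalgebra.counit (R := k) (rΛ.left j) • rΛ.right j) := by
          rw [map_sum]
          exact Finset.sum_congr rfl fun j _ => by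
            rw [map_smul, map_smul, smul_eq_mul, smul_eq_mul, mul_comm]
      _ = 1 := by rw [counit_left_sum, hpair]
  -- invertibility
  let rg : Coalgebra.Repr k g Unit :=
    ⟨(Finset.univ : Finset Unit), fun _ => g, fun _ => g, by simp [hcg]⟩
  have u1 : g * HopfAlgebra.antipode (R := k) g = 1 := by
    have := HopfAlgebra.sum_mul_antipode_eq_smul (R := k) rg
    simpa [rg, hεg] using this
  have u2 : HopfAlgebra.antipode (R := k) g * g = 1 := by
    have := HopfAlgebra.sum_antipode_mul_eq_smul (R := k) rg
    simpa [rg, hεg] using this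
  refine ⟨g, hg, hcg, hεg, ⟨⟨g, HopfAlgebra.antipode (R := k) g, u1, u2⟩, rfl⟩, ?_⟩
  intro g' hgp
  have e1 := hgp Λ
  have e2 := hg Λ
  rw [hpair, one_smul] at e1 e2
  exact e1.symm.trans e2
end
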